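/- For any ε ≥ 0 and any array of m skew-symmetric n×n paired comparison matrices, the generalized row sum system x_i = ∑_{(k,p)|i}(r_{ik}^p + ε(x_k − x_i + r_{ik}^p·m·n)), i = 1,...,n, has a unique real solution. -/
import Mathlib


open scoped Classical

/-- An array of `m` incomplete paired comparison `n × n` matrices with entries in
`[rmin, rmax]`: `defined p i j` says that the entry `r_{ij}^p` is defined, in
which case its value is `val p i j`. -/
structure Profile (rmin rmax : ℝ) (n m : ℕ) where
  defined : Fin m → Fin n → Fin n → Prop
  val : Fin m → Fin n → Fin n → ℝ
  defined_symm : ∀ p i j, defined p i j → defined p j i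
  defined_irrefl : ∀ p i, ¬ defined p i i
  val_mem : ∀ p i j, defined p i j → rmin ≤ val p i j ∧ val p i j ≤ rmax

noncomputable def Amap (rmin rmax : ℝ) (n m : ℕ) (P : Profile rmin rmax n m) (ε : ℝ) :
    (Fin n → ℝ) →ₗ[ℝ] (Fin n → ℝ) where
  toFun x := fun i => x i + ε * ∑ k, ∑ p, if P.defined p i k then (x i - x k) else 0
  map_add' x y := by
    funext i
    simp only [Pi.add_apply]
    have : ∀ k, ∀ p : Fin m, (if P.defined p i k then ((x i + y i) - (x k + y k)) else 0)
        = (if P.defined p i k then (x i - x k) else 0) + (if P.defined p i k then (y i - y k) else 0) := by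
      intro k p; split <;> ring
    simp only [this, Finset.sum_add_distrib]
    ring
  map_smul' c x := by
    funext i
    simp only [Pi.smul_apply, smul_eq_mul, RingHom.id_apply]
    have : ∀ k, ∀ p : Fin m, (if P.defined p i k then (c * x i - c * x k) else 0)
        = c * (if P.defined p i k then (x i - x k) else 0) := by
      intro k p; split <;> ring
    simp only [this, ← Finset.mul_sum]
    ring


/-- For any `ε ≥ 0` and any array of `m` skew-symmetric paired comparison
matrices, the generalized row sum system has a unique real solution. -/
theorem stmt18 (n m : ℕ) (rmax : ℝ) (P : Profile (-rmax) rmax n m)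
    (hskew : ∀ p i j, P.defined p i j → P.val p j i = -P.val p i j)
    (ε : ℝ) (hε : 0 ≤ ε) :
    ∃! x : Fin n → ℝ, ∀ i, x i = ∑ k, ∑ p, if P.defined p i k then
      P.val p i k + ε * (x k - x i + P.val p i k * (m : ℝ) * (n : ℝ)) else 0 := by
  set A := Amap (-rmax) rmax n m P ε with hA
  -- injectivity
  have hinj : Function.Injective A := by
    rw [injective_iff_map_eq_zero]
    intro x hx
    rcases Nat.eq_zero_or_pos n with hn | hn
    · funext i; exact absurd i.2 (by omega)
    haveI : Nonempty (Fin n) := ⟨⟨0, hn⟩⟩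
    have hne : (Finset.univ : Finset (Fin n)).Nonempty := Finset.univ_nonempty
    obtain ⟨imax, -, hmax⟩ := Finset.exists_max_image Finset.univ x hne
    obtain ⟨imin, -, hmin⟩ := Finset.exists_min_image Finset.univ x hne
    have hxeq : ∀ i, x i + ε * (∑ k, ∑ p, if P.defined p i k then (x i - x k) else 0) = 0 := by
      intro i
      have := congrFun hx i
      simpa [hA, Amap] using this
    have hmax0 : x imax ≤ 0 := by
      have hS : 0 ≤ ∑ k, ∑ p, if P.defined p imax k then (x imax - x k) else 0 := by
        apply Finset.sum_nonneg; intro k _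
        apply Finset.sum_nonneg; intro p _
        split
        · have := hmax k (Finset.mem_univ k); linarith
        · exact le_refl 0
      nlinarith [hxeq imax, mul_nonneg hε hS]
    have hmin0 : 0 ≤ x imin := by
      have hS : (∑ k, ∑ p, if P.defined p imin k then (x imin - x k) else 0) ≤ 0 := by
        apply Finset.sum_nonpos; intro k _
        apply Finset.sum_nonpos; intro p _
        split
        · have := hmin k (Finset.mem_univ k); linarith
        · exact le_refl 0
      nlinarith [hxeq imin, mul_nonpos_of_nonneg_of_nonpos hε hS]
    funext i
    have h1 := hmax i (Finset.mem_univ i)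
    have h2 := hmin i (Finset.mem_univ i)
    simp only [Pi.zero_apply]
    linarith
  have hsurj : Function.Surjective A := (LinearMap.injective_iff_surjective).mp hinj
  set b : Fin n → ℝ := fun i => ∑ k, ∑ p, if P.defined p i k then
      P.val p i k * (1 + ε * (m : ℝ) * (n : ℝ)) else 0 with hb
  -- equivalence of equations
  have key : ∀ x : Fin n → ℝ, (∀ i, x i = ∑ k, ∑ p, if P.defined p i k then
      P.val p i k + ε * (x k - x i + P.val p i k * (m : ℝ) * (n : ℝ)) else 0) ↔ A x = b := by
    intro x
    have hpt : ∀ i, (∑ k, ∑ p, if P.defined p i k then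
        P.val p i k + ε * (x k - x i + P.val p i k * (m : ℝ) * (n : ℝ)) else 0)
        = b i - ε * ∑ k, ∑ p, if P.defined p i k then (x i - x k) else 0 := by
      intro i
      rw [hb]
      rw [Finset.mul_sum, ← Finset.sum_sub_distrib]
      apply Finset.sum_congr rfl; intro k _
      rw [Finset.mul_sum, ← Finset.sum_sub_distrib]
      apply Finset.sum_congr rfl; intro p _
      split <;> ring
    constructor
    · intro h; funext i
      have := h i
      rw [hpt i] at this
      simp only [hA, Amap, LinearMap.coe_mk, AddHom.coe_mk]
      linarith
    · intro h i
      have := congrFun h i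
      simp only [hA, Amap, LinearMap.coe_mk, AddHom.coe_mk] at this
      rw [hpt i]
      linarith
  obtain ⟨x, hxb⟩ := hsurj b
  refine ⟨x, (key x).mpr hxb, ?_⟩
  intro y hy
  exact hinj (((key y).mp hy).trans hxb.symm)
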